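/- arXiv:math/0405258 — 2 statements merged into one kernel-verified Lean document; each statement's English description precedes it below -/
import Mathlib

section
/- Let π, σ ∈ S_n, let A be a partition of {1,...,n} invariant under π (each block is mapped to itself by π) and B a partition invariant under σ. Define |(A,π)| := 2|A| − |π|, where |A| = n − #(A) and |π| is the minimal transposition length of π. Then |(A ∨ B, πσ)| ≤ |(A,π)| + |(B,σ)|. -/
/-- The minimal number of transpositions needed to write `π` as a product of transpositions. -/
noncomputable def transLength {n : ℕ} (π : Equiv.Perm (Fin n)) : ℕ :=
  sInf {k | ∃ l : List (Equiv.Perm (Fin n)),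
    (∀ τ ∈ l, τ.IsSwap) ∧ l.prod = π ∧ l.length = k}

/-- The number of blocks of a set partition of `Fin n`, encoded as a setoid. -/
noncomputable def numBlocks {n : ℕ} (A : Setoid (Fin n)) : ℕ :=
  Nat.card (Quotient A)

/-- `|(A, π)| := 2|A| - |π|` with `|A| = n - #(A)`, as an integer. -/
noncomputable def pairNorm {n : ℕ} (A : Setoid (Fin n)) (π : Equiv.Perm (Fin n)) : ℤ :=
  2 * ((n : ℤ) - numBlocks A) - (transLength π : ℤ)

open Equiv Equiv.Perm

section Aux

variable {n : ℕ}

/-- The setoid identifying `a` and `b` and nothing else. -/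
def pairS (a b : Fin n) : Setoid (Fin n) :=
  ⟨fun x y => x = y ∨ (x = a ∧ y = b) ∨ (x = b ∧ y = a), by
    constructor
    · intro x; exact Or.inl rfl
    · rintro x y (rfl | ⟨rfl, rfl⟩ | ⟨rfl, rfl⟩) <;> tauto
    · rintro x y z (h | ⟨h1, h2⟩ | ⟨h1, h2⟩) (h' | ⟨h1', h2'⟩ | ⟨h1', h2'⟩) <;>
        subst_vars <;> tauto⟩

lemma pairS_rel (a b : Fin n) : pairS a b a b := Or.inr (Or.inl ⟨rfl, rfl⟩)

lemma pairS_le {a b : Fin n} {C : Setoid (Fin n)} (h : C a b) : pairS a b ≤ C := by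
  rw [Setoid.le_def]
  rintro x y (rfl | ⟨rfl, rfl⟩ | ⟨rfl, rfl⟩)
  · exact C.refl' x
  · exact h
  · exact C.symm' h

lemma pairS_rel_swap (a b x : Fin n) : pairS a b x (Equiv.swap a b x) := by
  rcases eq_or_ne x a with rfl | h
  · simp only [Equiv.swap_apply_left]; exact Or.inr (Or.inl ⟨rfl, rfl⟩)
  · rcases eq_or_ne x b with rfl | h'
    · simp only [Equiv.swap_apply_right]; exact Or.inr (Or.inr ⟨rfl, rfl⟩)
    · simp only [Equiv.swap_apply_of_ne_of_ne h h']; exact Or.inl rfl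

lemma numBlocks_le (C : Setoid (Fin n)) : numBlocks C ≤ n := by
  have : Function.Surjective (Quotient.mk C) := Quotient.mk_surjective
  simpa [numBlocks] using Nat.card_le_card_of_surjective _ this

/-- The canonical map on quotients induced by `C ≤ D`. -/
noncomputable def qmap {C D : Setoid (Fin n)} (h : C ≤ D) : Quotient C → Quotient D :=
  Quotient.map' id (fun _ _ hxy => Setoid.le_def.mp h hxy)

lemma qmap_mk {C D : Setoid (Fin n)} (h : C ≤ D) (x : Fin n) :
    qmap h (Quotient.mk C x) = Quotient.mk D x := rfl

lemma qmap_surjective {C D : Setoid (Fin n)} (h : C ≤ D) : Function.Surjective (qmap h) := by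
  intro q
  obtain ⟨x, rfl⟩ := Quotient.mk_surjective q
  exact ⟨Quotient.mk C x, rfl⟩

lemma numBlocks_mono {C D : Setoid (Fin n)} (h : C ≤ D) : numBlocks D ≤ numBlocks C :=
  Nat.card_le_card_of_surjective _ (qmap_surjective h)

lemma eq_of_le_of_numBlocks {C D : Setoid (Fin n)} (h : C ≤ D)
    (hc : numBlocks D = numBlocks C) : C = D := by
  have hbij : Function.Bijective (qmap h) := by
    rw [Nat.bijective_iff_surjective_and_card]
    exact ⟨qmap_surjective h, hc.symm⟩
  refine le_antisymm h ?_
  rw [Setoid.le_def]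
  intro x y hxy
  have : qmap h (Quotient.mk C x) = qmap h (Quotient.mk C y) := by
    rw [qmap_mk, qmap_mk]
    exact Quotient.sound hxy
  have := hbij.injective this
  exact Quotient.exact this

lemma numBlocks_lt {C D : Setoid (Fin n)} (h : C ≤ D) (hne : C ≠ D) :
    numBlocks D < numBlocks C :=
  lt_of_le_of_ne (numBlocks_mono h) (fun hc => hne (eq_of_le_of_numBlocks h hc))

/-- Joining a setoid with a pair decreases the number of blocks by at most one. -/
lemma numBlocks_sup_pair (C : Setoid (Fin n)) (a b : Fin n) :
    numBlocks C ≤ numBlocks (C ⊔ pairS a b) + 1 := by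
  classical
  set D := C ⊔ pairS a b with hD
  -- characterization of D
  have key : ∀ x y : Fin n, D x y → C x y ∨ (C x a ∧ C b y) ∨ (C x b ∧ C a y) := by
    have hD' : D ≤ ⟨fun x y => C x y ∨ (C x a ∧ C b y) ∨ (C x b ∧ C a y), by
        constructor
        · intro x; exact Or.inl (C.refl' x)
        · rintro x y (h | ⟨h1, h2⟩ | ⟨h1, h2⟩)
          · exact Or.inl (C.symm' h)
          · exact Or.inr (Or.inr ⟨C.symm' h2, C.symm' h1⟩)
          · exact Or.inr (Or.inl ⟨C.symm' h2, C.symm' h1⟩)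
        · rintro x y z (h | ⟨h1, h2⟩ | ⟨h1, h2⟩) (h' | ⟨h1', h2'⟩ | ⟨h1', h2'⟩)
          · exact Or.inl (C.trans' h h')
          · exact Or.inr (Or.inl ⟨C.trans' h h1', h2'⟩)
          · exact Or.inr (Or.inr ⟨C.trans' h h1', h2'⟩)
          · exact Or.inr (Or.inl ⟨h1, C.trans' h2 h'⟩)
          · exact Or.inr (Or.inr ⟨C.trans' h1 (C.symm' (C.trans' h2 h1')),
              C.trans' (C.symm' (C.trans' h2 h1')) h2'⟩)
          · exact Or.inl (C.trans' h1 h2')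
          · exact Or.inr (Or.inr ⟨h1, C.trans' h2 h'⟩)
          · exact Or.inl (C.trans' h1 h2')
          · exact Or.inr (Or.inl ⟨C.trans' h1 (C.symm' (C.trans' h2 h1')),
              C.trans' (C.symm' (C.trans' h2 h1')) h2'⟩)⟩ := by
      apply sup_le
      · rw [Setoid.le_def]; intro x y h; exact Or.inl h
      · rw [Setoid.le_def]
        rintro x y (rfl | ⟨rfl, rfl⟩ | ⟨rfl, rfl⟩)
        · exact Or.inl (C.refl' x)
        · exact Or.inr (Or.inl ⟨C.refl' _, C.refl' _⟩)
        · exact Or.inr (Or.inr ⟨C.refl' _, C.refl' _⟩)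
    intro x y h
    exact Setoid.le_def.mp hD' h
  have hle : C ≤ D := le_sup_left
  -- the induced map is injective away from ⟦b⟧
  have hinj : ∀ u v : Quotient C, u ≠ Quotient.mk C b → v ≠ Quotient.mk C b →
      qmap hle u = qmap hle v → u = v := by
    intro u v hu hv huv
    obtain ⟨x, rfl⟩ := Quotient.mk_surjective u
    obtain ⟨y, rfl⟩ := Quotient.mk_surjective v
    rw [qmap_mk, qmap_mk] at huv
    rcases key x y (Quotient.exact huv) with h | ⟨h1, h2⟩ | ⟨h1, h2⟩
    · exact Quotient.sound h
    · exact absurd (Quotient.sound (C.symm' h2)) hv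
    · exact absurd (Quotient.sound (C.trans' h1 (C.refl' b))) hu
  -- counting
  have h1 : Nat.card {u : Quotient C // u ≠ Quotient.mk C b} ≤ numBlocks D := by
    apply Nat.card_le_card_of_injective
      (fun u => qmap hle u.1)
    intro u v huv
    exact Subtype.ext (hinj u.1 v.1 u.2 v.2 huv)
  have h2 : numBlocks C ≤ Nat.card {u : Quotient C // u ≠ Quotient.mk C b} + 1 := by
    have : Nat.card ({u : Quotient C // u ≠ Quotient.mk C b} ⊕ Unit)
        = Nat.card {u : Quotient C // u ≠ Quotient.mk C b} + 1 := by
      rw [Nat.card_sum]; simp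
    rw [← this]
    apply Nat.card_le_card_of_injective
      (fun u => if h : u = Quotient.mk C b then Sum.inr Unit.unit else Sum.inl ⟨u, h⟩)
    intro u v huv
    by_cases hu : u = Quotient.mk C b <;> by_cases hv : v = Quotient.mk C b
    · rw [hu, hv]
    · simp [hu, hv] at huv
    · simp [hu, hv] at huv
    · simpa [hu, hv] using huv
  omega

lemma numBlocks_sup_pair_eq {C : Setoid (Fin n)} {a b : Fin n} (h : ¬ C a b) :
    numBlocks C = numBlocks (C ⊔ pairS a b) + 1 := by
  have h1 := numBlocks_sup_pair C a b
  have h2 : numBlocks (C ⊔ pairS a b) < numBlocks C := by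
    apply numBlocks_lt le_sup_left
    intro hEq
    exact h (hEq ▸ (Setoid.le_def.mp (le_sup_right (a := C)) (pairS_rel a b)))
  omega

/-- The orbit setoid of a permutation. -/
def orbS (π : Perm (Fin n)) : Setoid (Fin n) :=
  ⟨π.SameCycle, ⟨SameCycle.refl π, SameCycle.symm, SameCycle.trans⟩⟩

lemma orbS_rel (π : Perm (Fin n)) (x : Fin n) : orbS π x (π x) := ⟨1, by simp⟩

/-- The orbit setoid is the smallest setoid relating `x` and `π x`. -/
lemma orbS_le {π : Perm (Fin n)} {C : Setoid (Fin n)} (h : ∀ x, C x (π x)) :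
    orbS π ≤ C := by
  rw [Setoid.le_def]
  rintro x y ⟨i, rfl⟩
  induction i using Int.induction_on with
  | zero => simpa using C.refl x
  | succ k ih =>
      have : (π ^ ((k : ℤ) + 1)) x = π ((π ^ (k : ℤ)) x) := by
        rw [add_comm, zpow_add, zpow_one]; rfl
      rw [this]
      exact C.trans ih (h _)
  | pred k ih =>
      have : (π ^ (-(k : ℤ) - 1)) x = π⁻¹ ((π ^ (-(k : ℤ))) x) := by
        rw [sub_eq_add_neg, add_comm, zpow_add, zpow_neg_one]; simp [Perm.mul_apply]
      rw [this]
      refine C.trans ih ?_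
      have := h (π⁻¹ ((π ^ (-(k : ℤ))) x))
      simpa using C.symm this

lemma numBlocks_orbS_one : numBlocks (orbS (1 : Perm (Fin n))) = n := by
  have : Function.Bijective (Quotient.mk (orbS (1 : Perm (Fin n)))) := by
    constructor
    · intro x y h
      have := Quotient.exact h
      rwa [← sameCycle_one (x := x) (y := y)]
    · exact Quotient.mk_surjective
  have := Nat.card_eq_of_bijective _ this
  simp [numBlocks, ← this]

lemma orbS_swap_mul (ρ : Perm (Fin n)) (a b : Fin n) :
    orbS (Equiv.swap a b * ρ) ≤ orbS ρ ⊔ pairS a b := by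
  apply orbS_le
  intro x
  have h1 : (orbS ρ ⊔ pairS a b) x (ρ x) := Setoid.le_def.mp le_sup_left (orbS_rel ρ x)
  refine Setoid.trans' _ h1 ?_
  have heq : (Equiv.swap a b * ρ) x = Equiv.swap a b (ρ x) := rfl
  rw [heq]
  exact Setoid.le_def.mp (le_sup_right (a := orbS ρ)) (pairS_rel_swap a b (ρ x))

lemma orbS_mul_swap (ρ : Perm (Fin n)) (a b : Fin n) :
    orbS (ρ * Equiv.swap a b) ≤ orbS ρ ⊔ pairS a b := by
  apply orbS_le
  intro x
  have h2 : (orbS ρ ⊔ pairS a b) x (Equiv.swap a b x) :=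
    Setoid.le_def.mp (le_sup_right (a := orbS ρ)) (pairS_rel_swap a b x)
  refine Setoid.trans' _ h2 ?_
  have : (ρ * Equiv.swap a b) x = ρ (Equiv.swap a b x) := rfl
  rw [this]
  exact Setoid.le_def.mp le_sup_left (orbS_rel ρ _)

lemma orbS_swap (a b : Fin n) : orbS (Equiv.swap a b) = pairS a b := by
  refine le_antisymm (orbS_le (fun x => pairS_rel_swap a b x)) (pairS_le ?_)
  exact ⟨1, by simp⟩

/-! ### Facts about `transLength` -/

lemma transLength_spec (π : Perm (Fin n)) :
    ∃ l : List (Perm (Fin n)), (∀ τ ∈ l, τ.IsSwap) ∧ l.prod = π ∧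
      l.length = transLength π := by
  have hne : {k | ∃ l : List (Equiv.Perm (Fin n)),
      (∀ τ ∈ l, τ.IsSwap) ∧ l.prod = π ∧ l.length = k}.Nonempty := by
    obtain ⟨l, hl1, hl2⟩ := (truncSwapFactors π).out
    exact ⟨l.length, l, hl2, hl1, rfl⟩
  exact Nat.sInf_mem hne

lemma transLength_le {π : Perm (Fin n)} {l : List (Perm (Fin n))}
    (h : ∀ τ ∈ l, τ.IsSwap) (hp : l.prod = π) : transLength π ≤ l.length :=
  Nat.sInf_le ⟨l, h, hp, rfl⟩

lemma transLength_one : transLength (1 : Perm (Fin n)) = 0 :=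
  Nat.le_zero.mp (transLength_le (l := []) (by simp) (by simp))

lemma transLength_swap_mul_le {τ π : Perm (Fin n)} (hτ : τ.IsSwap) :
    transLength (τ * π) ≤ transLength π + 1 := by
  obtain ⟨l, h1, h2, h3⟩ := transLength_spec π
  have := transLength_le (π := τ * π) (l := τ :: l) (by
    intro σ hσ
    rcases List.mem_cons.mp hσ with rfl | hmem
    · exact hτ
    · exact h1 _ hmem) (by simp [h2])
  simpa [h3] using this

lemma transLength_mul_swap_le {τ π : Perm (Fin n)} (hτ : τ.IsSwap) :
    transLength (π * τ) ≤ transLength π + 1 := by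
  obtain ⟨l, h1, h2, h3⟩ := transLength_spec π
  have := transLength_le (π := π * τ) (l := l ++ [τ]) (by
    intro σ h
    rcases List.mem_append.mp h with h | h
    · exact h1 _ h
    · simp at h; rw [h]; exact hτ) (by simp [h2])
  simpa [h3] using this

lemma sign_eq_pow_transLength (π : Perm (Fin n)) :
    Perm.sign π = (-1) ^ transLength π := by
  obtain ⟨l, h1, h2, h3⟩ := transLength_spec π
  rw [← h3, ← h2]
  clear h2 h3
  induction l with
  | nil => simp
  | cons τ l ih =>
      have hτ := h1 τ List.mem_cons_self
      obtain ⟨a, b, hab, rfl⟩ := hτ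
      simp only [List.prod_cons, map_mul, Perm.sign_swap hab, List.length_cons]
      rw [ih (fun σ h => h1 σ (List.mem_cons_of_mem _ h))]
      rw [pow_add, pow_one]
      exact mul_comm _ _

/-- The lower bound `n ≤ |ρ| + #(orbits ρ)`. -/
lemma le_transLength_add_numBlocks (ρ : Perm (Fin n)) :
    n ≤ transLength ρ + numBlocks (orbS ρ) := by
  obtain ⟨l, h1, h2, h3⟩ := transLength_spec ρ
  rw [← h3, ← h2]
  clear h2 h3
  induction l with
  | nil => simp [numBlocks_orbS_one]
  | cons τ l ih =>
      have hτ := h1 τ List.mem_cons_self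
      obtain ⟨a, b, hab, rfl⟩ := hτ
      have ih' := ih (fun σ h => h1 σ (List.mem_cons_of_mem _ h))
      have key : numBlocks (orbS l.prod) ≤
          numBlocks (orbS ((Equiv.swap a b) * l.prod)) + 1 := by
        have e1 : numBlocks (orbS l.prod ⊔ pairS a b) ≤
            numBlocks (orbS ((Equiv.swap a b) * l.prod)) :=
          numBlocks_mono (orbS_swap_mul l.prod a b)
        have e2 := numBlocks_sup_pair (orbS l.prod) a b
        omega
      simp only [List.prod_cons, List.length_cons]
      omega

/-- The upper bound `|ρ| + #(orbits ρ) ≤ n`. -/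
lemma transLength_add_numBlocks_le (ρ : Perm (Fin n)) :
    transLength ρ + numBlocks (orbS ρ) ≤ n := by
  suffices H : ∀ k (π : Perm (Fin n)), numBlocks (orbS π) + k = n → transLength π ≤ k by
    have h := numBlocks_le (orbS ρ)
    have := H (n - numBlocks (orbS ρ)) ρ (by omega)
    omega
  intro k
  induction k using Nat.strong_induction_on with
  | _ k ih =>
    intro π hk
    by_cases hπ : π = 1
    · simp [hπ, transLength_one]
    · have : ∃ x, π x ≠ x := by
        by_contra h
        push_neg at h
        exact hπ (Equiv.ext h)
      obtain ⟨x, hx⟩ := this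
      set τ := Equiv.swap x (π x) with hτ
      have hfix : (τ * π) x = x := by
        simp [hτ, Perm.mul_apply, Equiv.swap_apply_right]
      have hle : orbS (τ * π) ≤ orbS π := by
        have h1 := orbS_swap_mul π x (π x)
        have h2 : pairS x (π x) ≤ orbS π := pairS_le (orbS_rel π x)
        calc orbS (τ * π) ≤ orbS π ⊔ pairS x (π x) := h1
          _ = orbS π := sup_eq_left.mpr h2
      have hne : orbS (τ * π) ≠ orbS π := by
        intro hEq
        have : orbS (τ * π) x (π x) := hEq ▸ orbS_rel π x
        obtain ⟨i, hi⟩ := this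
        rw [Perm.zpow_apply_eq_self_of_apply_eq_self hfix i] at hi
        exact hx hi.symm
      have hlt : numBlocks (orbS π) < numBlocks (orbS (τ * π)) :=
        numBlocks_lt hle hne
      have hcard : numBlocks (orbS (τ * π)) ≤ n := numBlocks_le _
      set k' := n - numBlocks (orbS (τ * π)) with hk'
      have hkk : k' < k := by omega
      have := ih k' hkk (τ * π) (by omega)
      have hLL : transLength π ≤ transLength (τ * π) + 1 := by
        have : τ * (τ * π) = π := by
          rw [← mul_assoc, hτ, Equiv.swap_mul_self, one_mul]
        calc transLength π = transLength (τ * (τ * π)) := by rw [this]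
          _ ≤ transLength (τ * π) + 1 :=
            transLength_swap_mul_le ⟨x, π x, Ne.symm hx, rfl⟩
      omega

lemma transLength_eq (ρ : Perm (Fin n)) :
    transLength ρ + numBlocks (orbS ρ) = n :=
  le_antisymm (transLength_add_numBlocks_le ρ) (le_transLength_add_numBlocks ρ)

/-- The key single-swap step. -/
lemma step_lemma {a b : Fin n} (hab : a ≠ b) (A : Setoid (Fin n)) (π : Perm (Fin n))
    (hA : ∀ x, A x (π x)) :
    2 * ((n : ℤ) - numBlocks (A ⊔ pairS a b)) - transLength (π * Equiv.swap a b)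
      ≤ 2 * ((n : ℤ) - numBlocks A) - transLength π + 1 := by
  by_cases hrel : A a b
  · -- same block : the partition does not change
    have hP : pairS a b ≤ A := pairS_le hrel
    rw [sup_eq_left.mpr hP]
    have : transLength π ≤ transLength (π * Equiv.swap a b) + 1 := by
      have h : π * Equiv.swap a b * Equiv.swap a b = π := by
        rw [mul_assoc, Equiv.swap_mul_self, mul_one]
      calc transLength π = transLength (π * Equiv.swap a b * Equiv.swap a b) := by rw [h]
        _ ≤ transLength (π * Equiv.swap a b) + 1 :=
          transLength_mul_swap_le ⟨a, b, hab, rfl⟩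
    push_cast
    omega
  · -- different blocks
    have hnb : numBlocks A = numBlocks (A ⊔ pairS a b) + 1 := numBlocks_sup_pair_eq hrel
    -- it suffices to show transLength π + 1 ≤ transLength (π * swap a b)
    suffices h : transLength π + 1 ≤ transLength (π * Equiv.swap a b) by
      push_cast
      omega
    by_contra hcon
    push_neg at hcon
    -- parity rules out equality
    have hsign : ((-1 : ℤˣ)) ^ transLength (π * Equiv.swap a b)
        = (-1) ^ (transLength π + 1) := by
      rw [← sign_eq_pow_transLength, map_mul, Perm.sign_swap hab,
        sign_eq_pow_transLength π, pow_succ]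
    have hparity : transLength (π * Equiv.swap a b) ≠ transLength π := by
      intro hEq
      rw [hEq, pow_succ] at hsign
      have h' : ((-1 : ℤˣ)) ^ transLength π * 1 = (-1) ^ transLength π * (-1) := by
        rw [mul_one]; exact hsign
      have := mul_left_cancel h'
      exact absurd this (by decide)
    have hlt : transLength (π * Equiv.swap a b) + 1 ≤ transLength π := by omega
    -- orbit partition of π does not relate a and b
    have horb : ¬ orbS π a b := fun h => hrel (Setoid.le_def.mp (orbS_le hA) h)
    have h1 : numBlocks (orbS π) = numBlocks (orbS π ⊔ pairS a b) + 1 :=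
      numBlocks_sup_pair_eq horb
    -- counting with the two-sided bounds
    have h2 := le_transLength_add_numBlocks (π * Equiv.swap a b)
    have h3 := transLength_add_numBlocks_le π
    have h4 : numBlocks (orbS π) + 1 ≤ numBlocks (orbS (π * Equiv.swap a b)) := by omega
    -- but orb(π) ≤ orb(πτ) ⊔ P, hence orb(π) ⊔ P ≤ orb(πτ) ⊔ P
    have h5 : orbS π ≤ orbS (π * Equiv.swap a b) ⊔ pairS a b := by
      have : (π * Equiv.swap a b) * Equiv.swap a b = π := by
        rw [mul_assoc, Equiv.swap_mul_self, mul_one]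
      calc orbS π = orbS ((π * Equiv.swap a b) * Equiv.swap a b) := by rw [this]
        _ ≤ orbS (π * Equiv.swap a b) ⊔ pairS a b := orbS_mul_swap _ a b
    have h6 : orbS π ⊔ pairS a b ≤ orbS (π * Equiv.swap a b) ⊔ pairS a b :=
      sup_le h5 le_sup_right
    have h7 : numBlocks (orbS (π * Equiv.swap a b) ⊔ pairS a b)
        ≤ numBlocks (orbS π ⊔ pairS a b) := numBlocks_mono h6
    have h8 := numBlocks_sup_pair (orbS (π * Equiv.swap a b)) a b
    omega

/-- Main induction over a list of swaps. -/
lemma main_lemma (l : List (Perm (Fin n))) (hl : ∀ τ ∈ l, τ.IsSwap)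
    (A : Setoid (Fin n)) (π : Perm (Fin n)) (hA : ∀ x, A x (π x)) :
    2 * ((n : ℤ) - numBlocks (A ⊔ l.foldr (fun τ E => orbS τ ⊔ E) ⊥))
        - transLength (π * l.prod)
      ≤ 2 * ((n : ℤ) - numBlocks A) - transLength π + l.length := by
  induction l generalizing A π with
  | nil =>
      simp only [List.foldr_nil, sup_bot_eq, List.prod_nil, mul_one, List.length_nil,
        Nat.cast_zero, add_zero, le_refl]
  | cons τ l ih =>
      obtain ⟨a, b, hab, rfl⟩ := hl τ List.mem_cons_self
      have hA' : ∀ x, (A ⊔ pairS a b) x ((π * Equiv.swap a b) x) := by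
        intro x
        have hx1 : (A ⊔ pairS a b) x (Equiv.swap a b x) :=
          Setoid.le_def.mp (le_sup_right (a := A)) (pairS_rel_swap a b x)
        refine Setoid.trans' _ hx1 ?_
        have heq : (π * Equiv.swap a b) x = π (Equiv.swap a b x) := rfl
        rw [heq]
        exact Setoid.le_def.mp le_sup_left (hA _)
      have ih' := ih (fun σ h => hl σ (List.mem_cons_of_mem _ h)) (A ⊔ pairS a b)
        (π * Equiv.swap a b) hA'
      have hsup : (A ⊔ pairS a b) ⊔ l.foldr (fun τ E => orbS τ ⊔ E) ⊥
          = A ⊔ (Equiv.swap a b :: l).foldr (fun τ E => orbS τ ⊔ E) ⊥ := by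
        simp only [List.foldr_cons, orbS_swap]
        rw [sup_assoc]
      rw [hsup] at ih'
      have hstep := step_lemma hab A π hA
      have hmul : π * (Equiv.swap a b :: l).prod = (π * Equiv.swap a b) * l.prod := by
        rw [List.prod_cons, mul_assoc]
      rw [hmul]
      simp only [List.length_cons]
      push_cast at ih' hstep ⊢
      omega

/-- Submodularity-style lemma: coarsening `Σ'` to `B` loses at least as much
after joining with `A`. -/
lemma sub_lemma (A : Setoid (Fin n)) :
    ∀ k (S B : Setoid (Fin n)), numBlocks S = k → S ≤ B →
      numBlocks (A ⊔ S) + numBlocks B ≤ numBlocks (A ⊔ B) + numBlocks S := by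
  intro k
  induction k using Nat.strong_induction_on with
  | _ k ih =>
    intro S B hk hSB
    by_cases hEq : S = B
    · subst hEq; omega
    · have : ∃ a b, B a b ∧ ¬ S a b := by
        by_contra h
        push_neg at h
        apply hEq
        apply le_antisymm hSB
        rw [Setoid.le_def]
        intro x y hxy
        exact h x y hxy
      obtain ⟨a, b, hBab, hSab⟩ := this
      set S' := S ⊔ pairS a b with hS'
      have hS'B : S' ≤ B := sup_le hSB (pairS_le hBab)
      have hnb : numBlocks S = numBlocks S' + 1 := numBlocks_sup_pair_eq hSab
      have hk' : numBlocks S' < k := by omega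
      have ih' := ih (numBlocks S') hk' S' B rfl hS'B
      have hA' : A ⊔ S' = (A ⊔ S) ⊔ pairS a b := by rw [hS', sup_assoc]
      have h2 : numBlocks (A ⊔ S) ≤ numBlocks (A ⊔ S') + 1 := by
        rw [hA']; exact numBlocks_sup_pair (A ⊔ S) a b
      omega

end Aux

theorem triangle_inequality {n : ℕ} (π σ : Equiv.Perm (Fin n)) (A B : Setoid (Fin n))
    (hA : ∀ x, A x (π x)) (hB : ∀ x, B x (σ x)) :
    pairNorm (A ⊔ B) (π * σ) ≤ pairNorm A π + pairNorm B σ := by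
  classical
  obtain ⟨l, hl1, hl2, hl3⟩ := transLength_spec σ
  -- the "pair join" setoid of the list
  set E : Setoid (Fin n) := l.foldr (fun τ E => orbS τ ⊔ E) ⊥ with hE
  -- the product of the list moves within E
  have hprodE : ∀ l' : List (Equiv.Perm (Fin n)), ∀ x,
      (l'.foldr (fun τ E => orbS τ ⊔ E) ⊥ : Setoid (Fin n)) x (l'.prod x) := by
    intro l'
    induction l' with
    | nil => intro x; simp only [List.prod_nil, Equiv.Perm.one_apply]; exact Setoid.refl' _ x
    | cons τ0 l' ih =>
        intro x
        simp only [List.prod_cons, List.foldr_cons]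
        have h1 : (orbS τ0 ⊔ l'.foldr (fun τ E => orbS τ ⊔ E) ⊥ : Setoid (Fin n))
            x (l'.prod x) := Setoid.le_def.mp (le_sup_right (a := orbS τ0)) (ih x)
        refine Setoid.trans' _ h1 ?_
        have : (τ0 * l'.prod) x = τ0 (l'.prod x) := rfl
        rw [this]
        exact Setoid.le_def.mp le_sup_left (orbS_rel τ0 _)
  -- orb σ ≤ E, orb σ ≤ B
  have hSE : orbS σ ≤ E := orbS_le (fun x => by
    have := hprodE l x; rwa [hl2] at this)
  have hSB : orbS σ ≤ B := orbS_le hB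
  -- main bound
  have hmain := main_lemma l hl1 A π hA
  rw [← hE] at hmain
  rw [hl2, hl3] at hmain
  -- numBlocks comparisons
  have hnbE : numBlocks E ≤ numBlocks (orbS σ) := numBlocks_mono hSE
  have hAE : numBlocks (A ⊔ E) ≤ numBlocks (A ⊔ orbS σ) :=
    numBlocks_mono (sup_le le_sup_left (le_trans hSE le_sup_right))
  have hsub := sub_lemma A (numBlocks (orbS σ)) (orbS σ) B rfl hSB
  have htl := transLength_eq σ
  have h1 := numBlocks_le (A ⊔ B)
  have h2 := numBlocks_le B
  have h3 := numBlocks_le (orbS σ)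
  simp only [pairNorm] at *
  push_cast at *
  omega
end

section
/- Let π ∈ S_{2l}, γ ∈ S_{2l} with r cycles, A a π-invariant partition and B a γπ^{-1}-invariant partition of {1,...,2l} with A ∨ B = 1_{2l} (the one-block partition). Suppose every block of B contains at most 2 cycles of γπ^{-1}, and let c_1 be the number of blocks of B containing exactly one cycle of γπ^{-1}. Then −2l − #(π) + 2#(A) + c_1 ≤ 2 − r. -/
open scoped Classical

/-- The number of cycles of `π`, counting fixed points as cycles. -/
noncomputable def numCycles {N : ℕ} (π : Equiv.Perm (Fin N)) : ℕ :=
  π.cycleType.card + (Finset.univ.filter fun x => π x = x).card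

/-- The number of cycles of `π` contained in the block `b` of the `π`-invariant
partition `B`, counted via the least elements of cycles lying in `b`. -/
noncomputable def nCyclesInBlock {N : ℕ} (π : Equiv.Perm (Fin N)) (B : Setoid (Fin N))
    (b : Quotient B) : ℕ :=
  (Finset.univ.filter (fun a : Fin N =>
    (Quotient.mk B a : Quotient B) = b ∧ ∀ x, π.SameCycle a x → a ≤ x)).card

/-- `c_i`: the number of blocks of `B` containing exactly `i` cycles of `π`. -/
noncomputable def cBlocks {N : ℕ} (π : Equiv.Perm (Fin N)) (B : Setoid (Fin N))
    (i : ℕ) : ℕ :=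
  Nat.card {b : Quotient B // nCyclesInBlock π B b = i}

namespace OE
open Equiv Equiv.Perm

variable {n : ℕ}


noncomputable def orb (δ : Perm (Fin n)) : Setoid (Fin n) := SameCycle.setoid δ

lemma orb_rel {δ : Perm (Fin n)} {x y : Fin n} : (orb δ) x y ↔ δ.SameCycle x y := Iff.rfl

noncomputable def cardQ (s : Setoid (Fin n)) : ℕ := Nat.card (Quotient s)

/-- L1 -/
lemma sameCycle_le (R : Setoid (Fin n)) (σ : Perm (Fin n)) (h : ∀ w, R w (σ w)) :
    ∀ {x y}, σ.SameCycle x y → R x y := by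
  have key : ∀ (i : ℤ) (x : Fin n), R x ((σ ^ i) x) := by
    intro i
    induction i using Int.induction_on with
    | zero => intro x; simpa using R.refl x
    | succ k ih =>
      intro x
      have e : σ ^ ((k : ℤ) + 1) = σ * σ ^ (k : ℤ) := by
        rw [add_comm, zpow_add, zpow_one]
      rw [e, Equiv.Perm.mul_apply]
      exact R.trans (ih x) (h _)
    | pred k ih =>
      intro x
      have e : σ ^ (-(k : ℤ)) = σ * σ ^ (-(k : ℤ) - 1) := by
        have h0 : (-(k : ℤ)) = 1 + (-(k : ℤ) - 1) := by ring
        conv_lhs => rw [h0]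
        rw [zpow_add, zpow_one]
      have h2 : R ((σ ^ (-(k : ℤ) - 1)) x) ((σ ^ (-(k : ℤ))) x) := by
        rw [e, Equiv.Perm.mul_apply]; exact h _
      exact R.trans (ih x) (R.symm h2)
  rintro x y ⟨i, rfl⟩
  exact key i x

lemma cardQ_mono {S T : Setoid (Fin n)} (h : S ≤ T) : cardQ T ≤ cardQ S := by
  apply Nat.card_le_card_of_surjective (Quotient.map' id (fun x y hxy => h hxy))
  intro u
  obtain ⟨x, rfl⟩ := Quotient.exists_rep u
  exact ⟨Quotient.mk S x, rfl⟩

lemma cardQ_le (s : Setoid (Fin n)) : cardQ s ≤ n := by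
  have : cardQ s ≤ Nat.card (Fin n) :=
    Nat.card_le_card_of_surjective (Quotient.mk s) (Quotient.mk_surjective)
  simpa using this

lemma cardQ_lt {S T : Setoid (Fin n)} (h : S ≤ T) {a b : Fin n}
    (hab : T a b) (hnab : ¬ S a b) : cardQ T < cardQ S := by
  have : Nat.card (Quotient T) < Nat.card (Quotient S) := by
    rw [Nat.card_eq_fintype_card, Nat.card_eq_fintype_card]
    apply Fintype.card_lt_of_surjective_not_injective (Quotient.map' id (fun x y hxy => h hxy))
    · intro u
      obtain ⟨x, rfl⟩ := Quotient.exists_rep u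
      exact ⟨Quotient.mk S x, rfl⟩
    · intro hinj
      apply hnab
      have : Quotient.map' id (fun x y hxy => h hxy) (Quotient.mk S a) =
          Quotient.map' id (fun x y hxy => h hxy) (Quotient.mk S b) := by
        have ea : Quotient.map' id (fun x y hxy => h hxy) (Quotient.mk S a)
            = Quotient.mk T a := rfl
        have eb : Quotient.map' id (fun x y hxy => h hxy) (Quotient.mk S b)
            = Quotient.mk T b := rfl
        rw [ea, eb]
        exact Quotient.sound hab
      exact Quotient.exact (hinj this)
  exact this

/-- adjoin the pair (a,b) to a setoid -/
def addPair (T : Setoid (Fin n)) (a b : Fin n) : Setoid (Fin n) where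
  r x y := T x y ∨ (T x a ∧ T b y) ∨ (T x b ∧ T a y)
  iseqv := by
    constructor
    · intro x; exact Or.inl (T.refl x)
    · rintro x y (h | ⟨h1, h2⟩ | ⟨h1, h2⟩)
      · exact Or.inl (T.symm h)
      · exact Or.inr (Or.inr ⟨T.symm h2, T.symm h1⟩)
      · exact Or.inr (Or.inl ⟨T.symm h2, T.symm h1⟩)
    · rintro x y z (h | ⟨h1, h2⟩ | ⟨h1, h2⟩) (h' | ⟨h1', h2'⟩ | ⟨h1', h2'⟩)
      · exact Or.inl (T.trans h h')
      · exact Or.inr (Or.inl ⟨T.trans h h1', h2'⟩)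
      · exact Or.inr (Or.inr ⟨T.trans h h1', h2'⟩)
      · exact Or.inr (Or.inl ⟨h1, T.trans h2 h'⟩)
      · exact Or.inl (T.trans h1 (T.trans (T.symm (T.trans h2 h1')) h2'))
      · exact Or.inl (T.trans h1 h2')
      · exact Or.inr (Or.inr ⟨h1, T.trans h2 h'⟩)
      · exact Or.inl (T.trans h1 h2')
      · exact Or.inl (T.trans h1 (T.trans (T.symm (T.trans h2 h1')) h2'))

lemma le_addPair (T : Setoid (Fin n)) (a b : Fin n) : T ≤ addPair T a b := by
  intro x y h; exact Or.inl h

lemma addPair_rel (T : Setoid (Fin n)) (a b : Fin n) : addPair T a b a b :=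
  Or.inr (Or.inl ⟨T.refl a, T.refl b⟩)

lemma addPair_le {T R : Setoid (Fin n)} {a b : Fin n} (h1 : T ≤ R) (h2 : R a b) :
    addPair T a b ≤ R := by
  rintro x y (h | ⟨ha, hb⟩ | ⟨ha, hb⟩)
  · exact h1 h
  · exact R.trans (h1 ha) (R.trans h2 (h1 hb))
  · exact R.trans (h1 ha) (R.trans (R.symm h2) (h1 hb))

lemma addPair_mono {T T' : Setoid (Fin n)} (a b : Fin n) (h : T ≤ T') :
    addPair T a b ≤ addPair T' a b :=
  addPair_le (le_trans h (le_addPair T' a b)) (addPair_rel T' a b)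

lemma cardQ_addPair_le (T : Setoid (Fin n)) (a b : Fin n) :
    cardQ T ≤ cardQ (addPair T a b) + 1 := by
  classical
  set P := addPair T a b with hP
  let g : Quotient T → Quotient P := Quotient.map' id (fun x y hxy => le_addPair T a b hxy)
  have hg : ∀ x : Fin n, g (Quotient.mk T x) = Quotient.mk P x := fun _ => rfl
  let h : Quotient T → Option (Quotient P) :=
    fun u => if u = Quotient.mk T a then none else some (g u)
  have hinj : Function.Injective h := by
    intro u v huv
    by_cases hx : u = Quotient.mk T a <;> by_cases hy : v = Quotient.mk T a
    · rw [hx, hy]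
    · exfalso
      simp only [h, if_pos hx, if_neg hy] at huv
      exact Option.some_ne_none _ huv.symm
    · exfalso
      simp only [h, if_neg hx, if_pos hy] at huv
      exact Option.some_ne_none _ huv
    · simp only [h, if_neg hx, if_neg hy, Option.some_inj] at huv
      obtain ⟨x, rfl⟩ := Quotient.exists_rep u
      obtain ⟨y, rfl⟩ := Quotient.exists_rep v
      rw [hg, hg] at huv
      have hPxy : P x y := Quotient.exact huv
      rcases hPxy with hr | ⟨h1, h2⟩ | ⟨h1, h2⟩
      · exact Quotient.sound hr
      · exact absurd (Quotient.sound h1) hx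
      · exact absurd (Quotient.sound (T.symm h2)) hy
  calc cardQ T ≤ Nat.card (Option (Quotient P)) := Nat.card_le_card_of_injective h hinj
    _ = cardQ P + 1 := by
        rw [cardQ, Nat.card_eq_fintype_card, Nat.card_eq_fintype_card, Fintype.card_option]



lemma pow_add_apply (δ : Perm (Fin n)) (s t : ℕ) (x : Fin n) :
    (δ ^ (s + t)) x = (δ ^ s) ((δ ^ t) x) := by
  rw [pow_add, Equiv.Perm.mul_apply]

lemma swap_pow_eq (δ : Perm (Fin n)) (a b : Fin n) :
    ∀ j, (∀ i, 1 ≤ i → i ≤ j → (δ ^ i) a ≠ a ∧ (δ ^ i) a ≠ b) →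
      ((Equiv.swap a b * δ) ^ j) a = (δ ^ j) a := by
  intro j
  induction j with
  | zero => intro _; rfl
  | succ m ih =>
    intro hyp
    have e1 : ((Equiv.swap a b * δ) ^ (m + 1)) a
        = (Equiv.swap a b * δ) (((Equiv.swap a b * δ) ^ m) a) := by
      rw [pow_succ', Equiv.Perm.mul_apply]
    rw [e1, ih (fun i h1 h2 => hyp i h1 (le_trans h2 (Nat.le_succ m))),
      Equiv.Perm.mul_apply]
    have e2 : (δ ^ (m + 1)) a = δ ((δ ^ m) a) := by rw [pow_succ', Equiv.Perm.mul_apply]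
    rw [← e2]
    exact Equiv.swap_apply_of_ne_of_ne (hyp (m + 1) (by omega) le_rfl).1
      (hyp (m + 1) (by omega) le_rfl).2

lemma zpow_reduce {δ : Perm (Fin n)} {a : Fin n} {q : ℕ} (hq : 0 < q)
    (hfix : (δ ^ q) a = a) (i : ℤ) : ∃ r : ℕ, r < q ∧ (δ ^ i) a = (δ ^ r) a := by
  have hqz : (0:ℤ) < (q:ℤ) := by exact_mod_cast hq
  refine ⟨(i % (q:ℤ)).toNat, ?_, ?_⟩
  · have h1 : 0 ≤ i % (q:ℤ) := Int.emod_nonneg i hqz.ne'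
    have h2 : i % (q:ℤ) < (q:ℤ) := Int.emod_lt_of_pos i hqz
    omega
  · have e : i = i % (q:ℤ) + (q:ℤ) * (i / (q:ℤ)) := by
      have := Int.mul_ediv_add_emod i (q:ℤ); omega
    have e2 : δ ^ i = δ ^ (i % (q:ℤ)) * (δ ^ (q:ℤ)) ^ (i / (q:ℤ)) := by
      conv_lhs => rw [e]
      rw [zpow_add, zpow_mul]
    have hfixz : (δ ^ (q:ℤ)) a = a := by rw [zpow_natCast]; exact hfix
    have e3 : ((δ ^ (q:ℤ)) ^ (i / (q:ℤ))) a = a :=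
      Equiv.Perm.zpow_apply_eq_self_of_apply_eq_self hfixz _
    rw [e2, Equiv.Perm.mul_apply, e3]
    have h1 : 0 ≤ i % (q:ℤ) := Int.emod_nonneg i hqz.ne'
    rw [← zpow_natCast δ ((i % (q:ℤ)).toNat), Int.toNat_of_nonneg h1]

/-- L3b : splitting -/
lemma not_sameCycle_swap_mul {δ : Perm (Fin n)} {a b : Fin n} (hab : a ≠ b)
    (h : δ.SameCycle a b) : ¬ (Equiv.swap a b * δ).SameCycle a b := by
  obtain ⟨k, hk0, _, hk⟩ := h.exists_pow_eq''
  have hex : ∃ j, 1 ≤ j ∧ ((δ ^ j) a = a ∨ (δ ^ j) a = b) := ⟨k, hk0, Or.inr hk⟩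
  set q := Nat.find hex with hqdef
  obtain ⟨hq1, hq2⟩ := Nat.find_spec hex
  have hmin : ∀ i, 1 ≤ i → i < q → (δ ^ i) a ≠ a ∧ (δ ^ i) a ≠ b := by
    intro i h1 h2
    have := Nat.find_min hex h2
    push_neg at this
    exact this h1
  have hqb : (δ ^ q) a = b := by
    rcases hq2 with ha | hb
    · exfalso
      obtain ⟨r, hr, hre⟩ := zpow_reduce (by omega : 0 < q) ha (k : ℤ)
      rw [zpow_natCast] at hre
      rw [hk] at hre
      rcases Nat.eq_zero_or_pos r with h0 | hpos
      · rw [h0] at hre; simp at hre; exact hab hre.symm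
      · exact (hmin r hpos hr).2 hre.symm
    · exact hb
  set δ' := Equiv.swap a b * δ with hδ'
  have hprev : ∀ j, j ≤ q - 1 → (δ' ^ j) a = (δ ^ j) a := by
    intro j hj
    exact swap_pow_eq δ a b j (fun i h1 h2 => hmin i h1 (by omega))
  have hfix : (δ' ^ q) a = a := by
    have : q = (q - 1) + 1 := by omega
    rw [this, pow_succ', Equiv.Perm.mul_apply, hprev (q-1) le_rfl, hδ',
      Equiv.Perm.mul_apply]
    have : δ ((δ ^ (q-1)) a) = (δ ^ q) a := by
      conv_rhs => rw [show q = 1 + (q - 1) by omega]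
      rw [pow_add_apply, pow_one]
    rw [this, hqb, Equiv.swap_apply_right]
  rintro ⟨i, hi⟩
  obtain ⟨r, hr, hre⟩ := zpow_reduce (by omega : 0 < q) hfix i
  rw [hi] at hre
  rcases Nat.eq_zero_or_pos r with h0 | hpos
  · rw [h0] at hre; simp at hre; exact hab hre.symm
  · rw [hprev r (by omega)] at hre
    exact (hmin r hpos hr).2 hre.symm

/-- L3a : merging -/
lemma sameCycle_swap_mul {δ : Perm (Fin n)} {a b : Fin n} (hab : a ≠ b)
    (h : ¬ δ.SameCycle a b) : (Equiv.swap a b * δ).SameCycle a b := by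
  have hex : ∃ j, 1 ≤ j ∧ (δ ^ j) a = a := by
    refine ⟨orderOf δ, ?_, by rw [pow_orderOf_eq_one]; rfl⟩
    exact orderOf_pos δ
  set q := Nat.find hex with hqdef
  obtain ⟨hq1, hq2⟩ := Nat.find_spec hex
  have hnb : ∀ i : ℕ, (δ ^ i) a ≠ b := by
    intro i hi
    exact h ⟨(i:ℤ), by rw [zpow_natCast]; exact hi⟩
  have hmin : ∀ i, 1 ≤ i → i < q → (δ ^ i) a ≠ a := by
    intro i h1 h2
    have := Nat.find_min hex h2
    push_neg at this
    exact this h1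
  set δ' := Equiv.swap a b * δ with hδ'
  have hprev : (δ' ^ (q - 1)) a = (δ ^ (q - 1)) a :=
    swap_pow_eq δ a b (q - 1) (fun i h1 h2 => ⟨hmin i h1 (by omega), hnb i⟩)
  refine ⟨(q : ℤ), ?_⟩
  rw [zpow_natCast]
  have : q = (q - 1) + 1 := by omega
  rw [this, pow_succ', Equiv.Perm.mul_apply, hprev, hδ', Equiv.Perm.mul_apply]
  have e : δ ((δ ^ (q-1)) a) = (δ ^ q) a := by
    conv_rhs => rw [show q = 1 + (q - 1) by omega]
    rw [pow_add_apply, pow_one]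
  rw [e, hq2, Equiv.swap_apply_left]


lemma orb_le_iff {δ : Perm (Fin n)} {R : Setoid (Fin n)} :
    orb δ ≤ R ↔ ∀ w, R w (δ w) := by
  constructor
  · intro h w
    exact h (⟨1, by simp⟩ : δ.SameCycle w (δ w))
  · intro h x y hxy
    exact sameCycle_le R δ h hxy

lemma orb_swap_mul_le (δ : Perm (Fin n)) (a b : Fin n) :
    orb (Equiv.swap a b * δ) ≤ addPair (orb δ) a b := by
  rw [orb_le_iff]
  intro w
  set P := addPair (orb δ) a b
  have h1 : P w (δ w) := le_addPair (orb δ) a b (orb_rel.mpr ⟨1, by simp⟩)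
  refine P.trans h1 ?_
  rcases eq_or_ne (δ w) a with h | ha
  · rw [Equiv.Perm.mul_apply, h, Equiv.swap_apply_left]
    exact addPair_rel (orb δ) a b
  · rcases eq_or_ne (δ w) b with h | hb
    · rw [Equiv.Perm.mul_apply, h, Equiv.swap_apply_right]
      exact P.symm (addPair_rel (orb δ) a b)
    · rw [Equiv.Perm.mul_apply, Equiv.swap_apply_of_ne_of_ne ha hb]

/-- splitting increases count (strictly) -/
lemma cardQ_split {δ : Perm (Fin n)} {a b : Fin n} (hab : a ≠ b)
    (h : δ.SameCycle a b) :
    cardQ (orb δ) < cardQ (orb (Equiv.swap a b * δ)) := by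
  apply cardQ_lt (S := orb (Equiv.swap a b * δ)) (T := orb δ)
  · -- orb (swap a b * δ) ≤ orb δ
    rw [orb_le_iff]
    intro w
    have h1 : (orb δ) w (δ w) := orb_rel.mpr ⟨1, by simp⟩
    refine (orb δ).trans h1 ?_
    rcases eq_or_ne (δ w) a with h' | ha
    · rw [Equiv.Perm.mul_apply, h', Equiv.swap_apply_left]
      exact orb_rel.mpr h
    · rcases eq_or_ne (δ w) b with h' | hb
      · rw [Equiv.Perm.mul_apply, h', Equiv.swap_apply_right]
        exact orb_rel.mpr h.symm
      · rw [Equiv.Perm.mul_apply, Equiv.swap_apply_of_ne_of_ne ha hb]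
  · exact orb_rel.mpr h
  · exact fun hc => not_sameCycle_swap_mul hab h (orb_rel.mp hc)

/-- merging decreases count -/
lemma cardQ_merge {δ : Perm (Fin n)} {a b : Fin n} (hab : a ≠ b)
    (h : ¬ δ.SameCycle a b) :
    cardQ (orb (Equiv.swap a b * δ)) + 1 ≤ cardQ (orb δ) := by
  have h1 : (Equiv.swap a b * δ).SameCycle a b := sameCycle_swap_mul hab h
  have := cardQ_split hab h1
  rwa [← mul_assoc, Equiv.swap_mul_self, one_mul] at this

/-- multiplying by a swap changes count by at most one (other direction) -/
lemma cardQ_swap_le {δ : Perm (Fin n)} (a b : Fin n) (hab : a ≠ b) :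
    cardQ (orb (Equiv.swap a b * δ)) ≤ cardQ (orb δ) + 1 := by
  have h1 : orb δ ≤ addPair (orb (Equiv.swap a b * δ)) a b := by
    have := orb_swap_mul_le (Equiv.swap a b * δ) a b
    rwa [← mul_assoc, Equiv.swap_mul_self, one_mul] at this
  calc cardQ (orb (Equiv.swap a b * δ))
      ≤ cardQ (addPair (orb (Equiv.swap a b * δ)) a b) + 1 := cardQ_addPair_le _ a b
    _ ≤ cardQ (orb δ) + 1 := by
        have := cardQ_mono h1
        omega

lemma sup_rel_left {S T : Setoid (Fin n)} {x y : Fin n} (h : S x y) : (S ⊔ T) x y :=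
  (le_sup_left : S ≤ S ⊔ T) h

lemma sup_rel_right {S T : Setoid (Fin n)} {x y : Fin n} (h : T x y) : (S ⊔ T) x y :=
  (le_sup_right : T ≤ S ⊔ T) h

lemma orb_mul_le_sup (β α : Perm (Fin n)) : orb (β * α) ≤ orb α ⊔ orb β := by
  rw [orb_le_iff]
  intro w
  refine Setoid.trans' _ (sup_rel_left (orb_rel.mpr ⟨1, by simp⟩ : (orb α) w (α w))) ?_
  exact sup_rel_right (orb_rel.mpr ⟨1, by simp⟩)

/-- L5 : genus inequality -/
lemma genus (β α : Perm (Fin n)) :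
    cardQ (orb (β * α)) + cardQ (orb α) + cardQ (orb β)
      ≤ n + 2 * cardQ (orb α ⊔ orb β) := by
  generalize hm : n - cardQ (orb β) = m
  induction m using Nat.strong_induction_on generalizing β with
  | _ m ih =>
    rcases Nat.lt_or_ge (cardQ (orb β)) n with hlt | hge
    · -- there is a non-fixed point
      have hex : ∃ x, β x ≠ x := by
        by_contra hc
        push_neg at hc
        have : Function.Injective (Quotient.mk (orb β)) := by
          intro x y hxy
          have := Quotient.exact hxy
          obtain ⟨i, hi⟩ := (orb_rel.mp this)
          rwa [Equiv.Perm.zpow_apply_eq_self_of_apply_eq_self (hc x) i] at hi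
        have := Nat.card_le_card_of_injective _ this
        simp only [Nat.card_eq_fintype_card, Fintype.card_fin] at this
        have h2 : cardQ (orb β) = Nat.card (Quotient (orb β)) := rfl
        rw [Nat.card_eq_fintype_card] at h2
        omega
      obtain ⟨x, hx⟩ := hex
      set τ := Equiv.swap x (β x) with hτ
      set β' := τ * β with hβ'
      have hxbx : x ≠ β x := fun h => hx h.symm
      have hsc : β.SameCycle x (β x) := ⟨1, by simp⟩
      have hsplit : cardQ (orb β) < cardQ (orb β') := cardQ_split hxbx hsc
      have hβeq : β = τ * β' := by rw [hβ', ← mul_assoc, hτ, Equiv.swap_mul_self, one_mul]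
      have hβ'le : cardQ (orb β') ≤ n := cardQ_le _
      have ihm := ih (n - cardQ (orb β')) (by omega) β' rfl
      -- orb β ≤ addPair (orb β') x (β x)
      have horbβ : orb β ≤ addPair (orb β') x (β x) := by
        have := orb_swap_mul_le β' x (β x)
        rwa [← hβeq] at this
      -- sup bound : orb α ⊔ orb β ≤ addPair (orb α ⊔ orb β') x (β x)
      have hsup : orb α ⊔ orb β ≤ addPair (orb α ⊔ orb β') x (β x) := by
        apply sup_le
        · exact le_trans le_sup_left (le_addPair _ _ _)
        · exact le_trans horbβ (addPair_mono _ _ le_sup_right)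
      by_cases hcase : (β' * α).SameCycle x (β x)
      · -- case 2 : no loss in sup
        have hpair : (orb α ⊔ orb β') x (β x) := (orb_mul_le_sup β' α) (orb_rel.mpr hcase)
        have hsup2 : orb α ⊔ orb β ≤ orb α ⊔ orb β' :=
          le_trans hsup (addPair_le le_rfl hpair)
        have hc1 : cardQ (orb α ⊔ orb β') ≤ cardQ (orb α ⊔ orb β) := cardQ_mono hsup2
        have hc2 : cardQ (orb (β * α)) ≤ cardQ (orb (β' * α)) + 1 := by
          have : β * α = τ * (β' * α) := by rw [hβeq, mul_assoc]
          rw [this]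
          exact cardQ_swap_le x (β x) hxbx
        omega
      · -- case 1 : merge in β*α
        have hc2 : cardQ (orb (β * α)) + 1 ≤ cardQ (orb (β' * α)) := by
          have he : β * α = τ * (β' * α) := by rw [hβeq, mul_assoc]
          rw [he]
          exact cardQ_merge hxbx hcase
        have hc1 : cardQ (orb α ⊔ orb β') ≤ cardQ (orb α ⊔ orb β) + 1 := by
          have := cardQ_mono hsup
          have := cardQ_addPair_le (orb α ⊔ orb β') x (β x)
          omega
        omega
    · -- β = 1 case : all points fixed
      have hfix : ∀ y, β y = y := by
        by_contra hc
        push_neg at hc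
        obtain ⟨y, hy⟩ := hc
        -- then the class of y has ≥ 2 elements, so cardQ < n
        have hlt : cardQ (orb β) < n := by
          have hsurj : Function.Surjective (Quotient.mk (orb β)) := Quotient.mk_surjective
          have hni : ¬ Function.Injective (Quotient.mk (orb β)) := by
            intro hinj
            have hsc : β.SameCycle y (β y) := ⟨1, by simp⟩
            exact hy (hinj (Quotient.sound (orb_rel.mpr hsc.symm)) : β y = y)
          rw [cardQ, Nat.card_eq_fintype_card]
          have := Fintype.card_lt_of_surjective_not_injective _ hsurj hni
          simpa using this
        omega
      have hβ1 : β = 1 := Equiv.ext fun y => hfix y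
      subst hβ1
      have h1 : orb (1 : Perm (Fin n)) ≤ orb α := by
        rw [orb_le_iff]; intro w; simpa using (orb α).refl w
      have hsup : orb α ⊔ orb (1 : Perm (Fin n)) = orb α := sup_eq_left.mpr h1
      rw [one_mul, hsup]
      have := cardQ_le (orb (1 : Perm (Fin n)))
      omega

lemma main_ineq (α β : Perm (Fin n)) (A B : Setoid (Fin n))
    (hA : orb α ≤ A) (hB : orb β ≤ B) :
    cardQ (orb (β * α)) + 2 * cardQ A + 2 * cardQ B
      ≤ n + cardQ (orb α) + cardQ (orb β) + 2 * cardQ (A ⊔ B) := by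
  generalize hm : (cardQ (orb α) - cardQ A) + (cardQ (orb β) - cardQ B) = m
  induction m using Nat.strong_induction_on generalizing α β with
  | _ m ih =>
  have hcA : cardQ A ≤ cardQ (orb α) := cardQ_mono hA
  have hcB : cardQ B ≤ cardQ (orb β) := cardQ_mono hB
  by_cases hstepA : ∃ a b, A a b ∧ ¬ α.SameCycle a b
  · obtain ⟨a, b, hrel, hnab⟩ := hstepA
    have hab : a ≠ b := fun he => hnab (he ▸ Equiv.Perm.SameCycle.refl α a)
    set α' := Equiv.swap a b * α with hα'
    have hA' : orb α' ≤ A := le_trans (orb_swap_mul_le α a b) (addPair_le hA hrel)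
    have hmerge : cardQ (orb α') + 1 ≤ cardQ (orb α) := cardQ_merge hab hnab
    have hcA' : cardQ A ≤ cardQ (orb α') := cardQ_mono hA'
    have ihm := ih ((cardQ (orb α') - cardQ A) + (cardQ (orb β) - cardQ B))
      (by omega) α' β hA' hB rfl
    have hαrec : α = Equiv.swap a b * α' := by
      rw [hα', ← mul_assoc, Equiv.swap_mul_self, one_mul]
    have hlink : β * α = Equiv.swap (β a) (β b) * (β * α') := by
      rw [Equiv.swap_apply_apply, hαrec]; group
    have hβab : β a ≠ β b := fun h => hab (β.injective h)
    have hcount : cardQ (orb (β * α)) ≤ cardQ (orb (β * α')) + 1 := by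
      rw [hlink]; exact cardQ_swap_le _ _ hβab
    omega
  · by_cases hstepB : ∃ a b, B a b ∧ ¬ β.SameCycle a b
    · obtain ⟨a, b, hrel, hnab⟩ := hstepB
      have hab : a ≠ b := fun he => hnab (he ▸ Equiv.Perm.SameCycle.refl β a)
      set β' := Equiv.swap a b * β with hβ'
      have hB' : orb β' ≤ B := le_trans (orb_swap_mul_le β a b) (addPair_le hB hrel)
      have hmerge : cardQ (orb β') + 1 ≤ cardQ (orb β) := cardQ_merge hab hnab
      have hcB' : cardQ B ≤ cardQ (orb β') := cardQ_mono hB'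
      have ihm := ih ((cardQ (orb α) - cardQ A) + (cardQ (orb β') - cardQ B))
        (by omega) α β' hA hB' rfl
      have hlink : β * α = Equiv.swap a b * (β' * α) := by
        rw [hβ']; group; rw [Equiv.swap_mul_self]; group
      have hcount : cardQ (orb (β * α)) ≤ cardQ (orb (β' * α)) + 1 := by
        rw [hlink]; exact cardQ_swap_le _ _ hab
      omega
    · push_neg at hstepA hstepB
      have hAle : A ≤ orb α := by intro x y h; exact hstepA x y h
      have hBle : B ≤ orb β := by intro x y h; exact hstepB x y h
      have hAeq : A = orb α := le_antisymm hAle hA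
      have hBeq : B = orb β := le_antisymm hBle hB
      rw [hAeq, hBeq]
      have := genus β α
      omega

/-- minimal representatives of cycles -/
noncomputable def M (δ : Perm (Fin n)) : Finset (Fin n) :=
  Finset.univ.filter (fun a => ∀ x, δ.SameCycle a x → a ≤ x)

lemma exists_min (δ : Perm (Fin n)) (x : Fin n) :
    ∃ m, δ.SameCycle x m ∧ ∀ y, δ.SameCycle m y → m ≤ y := by
  classical
  have hne : (Finset.univ.filter (fun y => δ.SameCycle x y)).Nonempty :=
    ⟨x, by simp [Equiv.Perm.SameCycle.rfl]⟩
  have hmem := Finset.min'_mem _ hne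
  rw [Finset.mem_filter] at hmem
  refine ⟨_, hmem.2, fun y hy => Finset.min'_le _ _ ?_⟩
  rw [Finset.mem_filter]
  exact ⟨Finset.mem_univ _, hmem.2.trans hy⟩

lemma mem_M {δ : Perm (Fin n)} {a : Fin n} :
    a ∈ M δ ↔ ∀ x, δ.SameCycle a x → a ≤ x := by
  simp [M]

lemma cardQ_orb_eq_M (δ : Perm (Fin n)) : cardQ (orb δ) = (M δ).card := by
  have hbij : Function.Bijective
      (fun a : {a // a ∈ M δ} => Quotient.mk (orb δ) (a : Fin n)) := by
    constructor
    · rintro ⟨a1, h1⟩ ⟨a2, h2⟩ he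
      have hsc : δ.SameCycle a1 a2 := Quotient.exact he
      have l1 := (mem_M.mp h1) a2 hsc
      have l2 := (mem_M.mp h2) a1 hsc.symm
      exact Subtype.ext (le_antisymm l1 l2)
    · intro u
      obtain ⟨x, rfl⟩ := Quotient.exists_rep u
      obtain ⟨m, hm1, hm2⟩ := exists_min δ x
      exact ⟨⟨m, mem_M.mpr hm2⟩, Quotient.sound (orb_rel.mpr hm1.symm)⟩
  have := Nat.card_eq_of_bijective _ hbij
  rw [cardQ, ← this, Nat.card_eq_fintype_card, Fintype.card_coe]

lemma numCycles_eq_M (δ : Perm (Fin n)) : numCycles δ = (M δ).card := by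
  classical
  have hfixmin : ∀ a : Fin n, δ a = a → ∀ x, δ.SameCycle a x → a ≤ x := by
    rintro a ha x ⟨i, hi⟩
    rw [Equiv.Perm.zpow_apply_eq_self_of_apply_eq_self ha i] at hi
    exact le_of_eq hi
  have hsplit : (M δ).card
      = ((M δ).filter (fun a => δ a = a)).card + ((M δ).filter (fun a => ¬ δ a = a)).card :=
    (Finset.card_filter_add_card_filter_not _).symm
  have hfix : (M δ).filter (fun a => δ a = a) = Finset.univ.filter (fun a => δ a = a) := by
    ext a
    simp only [Finset.mem_filter, Finset.mem_univ, true_and, M, and_iff_right_iff_imp]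
    exact fun ha => hfixmin a ha
  have hcyc : ((M δ).filter (fun a => ¬ δ a = a)).card = δ.cycleFactorsFinset.card := by
    apply Finset.card_bij (fun a _ => δ.cycleOf a)
    · intro a ha
      simp only [Finset.mem_filter] at ha
      exact Equiv.Perm.cycleOf_mem_cycleFactorsFinset_iff.mpr (Equiv.Perm.mem_support.mpr ha.2)
    · intro a1 h1 a2 h2 he
      simp only [Finset.mem_filter] at h1 h2
      have hsc : δ.SameCycle a1 a2 := by
        have hmem : a2 ∈ (δ.cycleOf a1).support := by
          rw [he]
          exact Equiv.Perm.mem_support_cycleOf_iff.mpr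
            ⟨Equiv.Perm.SameCycle.rfl, Equiv.Perm.mem_support.mpr h2.2⟩
        exact (Equiv.Perm.mem_support_cycleOf_iff.mp hmem).1
      exact le_antisymm ((mem_M.mp h1.1) a2 hsc) ((mem_M.mp h2.1) a1 hsc.symm)
    · intro c hc
      have hc' := Equiv.Perm.mem_cycleFactorsFinset_iff.mp hc
      obtain ⟨x, hx, -⟩ := hc'.1
      have hxs : x ∈ c.support := Equiv.Perm.mem_support.mpr hx
      have hδx : δ x ≠ x := by
        have := hc'.2 x hxs
        rw [← this]; exact hx
      obtain ⟨m, hm1, hm2⟩ := exists_min δ x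
      have hδm : δ m ≠ m := by
        intro hfixm
        obtain ⟨i, hi⟩ := hm1.symm
        rw [Equiv.Perm.zpow_apply_eq_self_of_apply_eq_self hfixm i] at hi
        exact hδx (by rw [← hi]; exact hfixm)
      refine ⟨m, ?_, ?_⟩
      · simp only [Finset.mem_filter]
        exact ⟨mem_M.mpr hm2, hδm⟩
      · have h1 : c = δ.cycleOf x := Equiv.Perm.cycle_is_cycleOf hxs hc
        have h2 : δ.cycleOf m = δ.cycleOf x := Equiv.Perm.SameCycle.cycleOf_eq hm1.symm
        rw [h2, h1]
  have hct : δ.cycleType.card = δ.cycleFactorsFinset.card := by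
    rw [Equiv.Perm.cycleType_def]
    simp
  rw [numCycles, hct, hsplit, hfix, hcyc]
  omega

lemma blocks_count (β : Perm (Fin n)) (B : Setoid (Fin n)) (hB : orb β ≤ B)
    (hle2 : ∀ b, nCyclesInBlock β B b ≤ 2) :
    cBlocks β B 1 + cardQ (orb β) = 2 * Nat.card (Quotient B) := by
  classical
  have hblock : ∀ b : Quotient B, nCyclesInBlock β B b
      = ((M β).filter (fun a => Quotient.mk B a = b)).card := by
    intro b
    have he : (Finset.univ.filter (fun a : Fin n =>
        (Quotient.mk B a : Quotient B) = b ∧ ∀ x, β.SameCycle a x → a ≤ x))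
        = (M β).filter (fun a => Quotient.mk B a = b) := by
      ext a
      simp only [M, Finset.filter_filter, Finset.mem_filter, Finset.mem_univ, true_and]
      tauto
    rw [nCyclesInBlock, he]
  have hsum : ∑ b : Quotient B, nCyclesInBlock β B b = (M β).card := by
    simp_rw [hblock]
    exact (Finset.card_eq_sum_card_fiberwise
      (fun a _ => Finset.mem_univ (Quotient.mk B a))).symm
  have h1 : ∀ b : Quotient B, 1 ≤ nCyclesInBlock β B b := by
    intro b
    obtain ⟨x, rfl⟩ := Quotient.exists_rep b
    rw [hblock]
    have hpos : ((M β).filter (fun a => Quotient.mk B a = Quotient.mk B x)).Nonempty := by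
      obtain ⟨m, hm1, hm2⟩ := exists_min β x
      refine ⟨m, ?_⟩
      rw [Finset.mem_filter]
      exact ⟨mem_M.mpr hm2, Quotient.sound (hB (orb_rel.mpr hm1.symm))⟩
    exact Nat.one_le_iff_ne_zero.mpr (Finset.card_ne_zero_of_mem hpos.choose_spec)
  set c1 := (Finset.univ.filter (fun b : Quotient B => nCyclesInBlock β B b = 1)).card with hc1
  set c2 := (Finset.univ.filter (fun b : Quotient B => nCyclesInBlock β B b = 2)).card with hc2
  have hfneg : Finset.univ.filter (fun b : Quotient B => ¬ nCyclesInBlock β B b = 1)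
      = Finset.univ.filter (fun b : Quotient B => nCyclesInBlock β B b = 2) := by
    ext b
    have ha := h1 b
    have hb := hle2 b
    simp only [Finset.mem_filter, Finset.mem_univ, true_and]
    omega
  have e1 : ∑ b ∈ Finset.univ.filter (fun b : Quotient B => nCyclesInBlock β B b = 1),
      nCyclesInBlock β B b = c1 := by
    rw [Finset.sum_congr rfl (fun b hb => (Finset.mem_filter.mp hb).2), Finset.sum_const,
      smul_eq_mul, mul_one]
  have e2 : ∑ b ∈ Finset.univ.filter (fun b : Quotient B => ¬ nCyclesInBlock β B b = 1),
      nCyclesInBlock β B b = 2 * c2 := by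
    rw [hfneg, Finset.sum_congr rfl (fun b hb => (Finset.mem_filter.mp hb).2), Finset.sum_const,
      smul_eq_mul, mul_comm]
  have hsplitsum : ∑ b : Quotient B, nCyclesInBlock β B b = c1 + 2 * c2 := by
    rw [← Finset.sum_filter_add_sum_filter_not Finset.univ
      (fun b : Quotient B => nCyclesInBlock β B b = 1), e1, e2]
  have hcard : Fintype.card (Quotient B) = c1 + c2 := by
    rw [← Finset.card_univ,
      ← Finset.card_filter_add_card_filter_not
        (fun b : Quotient B => nCyclesInBlock β B b = 1), hfneg]
  have hcb : cBlocks β B 1 = c1 := by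
    rw [cBlocks, Nat.card_eq_fintype_card, Fintype.card_subtype]
  have hq : Nat.card (Quotient B) = Fintype.card (Quotient B) := Nat.card_eq_fintype_card
  have hM : cardQ (orb β) = (M β).card := cardQ_orb_eq_M β
  omega

lemma numCycles_eq_cardQ (δ : Perm (Fin n)) : numCycles δ = cardQ (orb δ) := by
  rw [numCycles_eq_M, cardQ_orb_eq_M]

end OE

theorem order_estimate (l r : ℕ) (π γ : Equiv.Perm (Fin (2 * l)))
    (hγ : numCycles γ = r)
    (A B : Setoid (Fin (2 * l)))
    (hA : ∀ x, A x (π x)) (hB : ∀ x, B x ((γ * π⁻¹) x))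
    (hAB : A ⊔ B = (⊤ : Setoid (Fin (2 * l))))
    (hle2 : ∀ b, nCyclesInBlock (γ * π⁻¹) B b ≤ 2) :
    -(2 * (l : ℤ)) - (numCycles π : ℤ) + 2 * (Nat.card (Quotient A) : ℤ) +
        (cBlocks (γ * π⁻¹) B 1 : ℤ) ≤ 2 - (r : ℤ) := by
  have hA' : OE.orb π ≤ A := OE.orb_le_iff.mpr hA
  have hB' : OE.orb (γ * π⁻¹) ≤ B := OE.orb_le_iff.mpr hB
  have hmain := OE.main_ineq π (γ * π⁻¹) A B hA' hB'
  rw [inv_mul_cancel_right] at hmain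
  have htop : OE.cardQ (A ⊔ B) ≤ 1 := by
    rw [hAB, OE.cardQ, Nat.card_eq_fintype_card, Fintype.card_le_one_iff]
    intro u v
    obtain ⟨x, rfl⟩ := Quotient.exists_rep u
    obtain ⟨y, rfl⟩ := Quotient.exists_rep v
    exact Quotient.sound trivial
  have hT2 := OE.blocks_count (γ * π⁻¹) B hB' hle2
  have hπe : numCycles π = OE.cardQ (OE.orb π) := OE.numCycles_eq_cardQ π
  have hre : r = OE.cardQ (OE.orb γ) := by rw [← hγ, OE.numCycles_eq_cardQ]
  have haA : Nat.card (Quotient A) = OE.cardQ A := rfl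
  have haB : Nat.card (Quotient B) = OE.cardQ B := rfl
  omega
end
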